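/- If m ≥ M′(p,b), then for every natural number n, 1 − φ(1)^n ≤ 1 − (1 − β·p^b·(1 + p^{−mb})/p^{mb})^n. -/

import Mathlib

/-- β = (p^{b+1} − 1)/(p^b (p − 1)) -/
noncomputable def betaC (p : ℕ) (b : ℝ) : ℝ :=
  ((p : ℝ) ^ (b + 1) - 1) / ((p : ℝ) ^ b * ((p : ℝ) - 1))

/-- φ(k), with φ(0) = 1. -/
noncomputable def phiC (p : ℕ) (b : ℝ) (m : ℕ) (k : ℕ) : ℝ :=
  if k = 0 then 1 else
    ((p : ℝ) ^ ((m : ℝ) * b) / ((p : ℝ) ^ ((m : ℝ) * b) - 1)) *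
      (1 - betaC p b * (p : ℝ) ^ (((k : ℝ) - (m : ℝ)) * b))

/-- M′(p,b) = (1/b)·log_p(2√2·p^b). -/
noncomputable def Mprime (p : ℕ) (b : ℝ) : ℝ :=
  (1 / b) * Real.logb p (2 * Real.sqrt 2 * (p : ℝ) ^ b)

set_option maxHeartbeats 1000000 in
/-- If `m ≥ M′(p,b)`, then for every natural number `n`,
`1 − φ(1)^n ≤ 1 − (1 − β·p^b·(1 + p^{−mb})/p^{mb})^n`. -/
theorem stmt12 (p : ℕ) (hp : p.Prime) (b : ℝ) (hb : 0 < b) (m : ℕ) (hm : 0 < m)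
    (hM : Mprime p b ≤ (m : ℝ)) (n : ℕ) :
    1 - phiC p b m 1 ^ n ≤
      1 - (1 - betaC p b * (p : ℝ) ^ b * (1 + (p : ℝ) ^ (-(m : ℝ) * b)) /
            (p : ℝ) ^ ((m : ℝ) * b)) ^ n := by
  have hq2 : (2 : ℝ) ≤ (p : ℝ) := by exact_mod_cast hp.two_le
  have hq0 : (0 : ℝ) < (p : ℝ) := by linarith
  have hq1 : (1 : ℝ) < (p : ℝ) := by linarith
  have hQ1 : (1 : ℝ) < (p : ℝ) ^ b :=
    (Real.one_lt_rpow_iff_of_pos hq0).mpr (Or.inl ⟨hq1, hb⟩)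
  have hQ0 : (0 : ℝ) < (p : ℝ) ^ b := by linarith
  have hP1 : (1 : ℝ) < (p : ℝ) ^ ((m : ℝ) * b) :=
    (Real.one_lt_rpow_iff_of_pos hq0).mpr
      (Or.inl ⟨hq1, by positivity⟩)
  have hP0 : (0 : ℝ) < (p : ℝ) ^ ((m : ℝ) * b) := by linarith
  have hs2 : Real.sqrt 2 ^ 2 = 2 := Real.sq_sqrt (by norm_num)
  have hs0 : (0 : ℝ) ≤ Real.sqrt 2 := Real.sqrt_nonneg 2
  have hs1 : (1 : ℝ) < Real.sqrt 2 := by nlinarith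
  -- the key size hypothesis: P ≥ 2√2 Q
  have hPQ : 2 * Real.sqrt 2 * (p : ℝ) ^ b ≤ (p : ℝ) ^ ((m : ℝ) * b) := by
    have harg : (0 : ℝ) < 2 * Real.sqrt 2 * (p : ℝ) ^ b := by nlinarith
    have h1 : Real.logb p (2 * Real.sqrt 2 * (p : ℝ) ^ b) ≤ (m : ℝ) * b := by
      have h := mul_le_mul_of_nonneg_left hM hb.le
      unfold Mprime at h
      have hbne : b ≠ 0 := ne_of_gt hb
      calc Real.logb p (2 * Real.sqrt 2 * (p : ℝ) ^ b)
          = b * ((1 / b) * Real.logb p (2 * Real.sqrt 2 * (p : ℝ) ^ b)) := by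
            field_simp
        _ ≤ b * (m : ℝ) := h
        _ = (m : ℝ) * b := by ring
    calc 2 * Real.sqrt 2 * (p : ℝ) ^ b
        = (p : ℝ) ^ Real.logb p (2 * Real.sqrt 2 * (p : ℝ) ^ b) :=
          (Real.rpow_logb hq0 (ne_of_gt hq1) harg).symm
      _ ≤ (p : ℝ) ^ ((m : ℝ) * b) :=
          Real.rpow_le_rpow_of_exponent_le hq1.le h1
  -- A := β * p^b
  set Q : ℝ := (p : ℝ) ^ b with hQdef
  set P : ℝ := (p : ℝ) ^ ((m : ℝ) * b) with hPdef
  clear_value Q P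
  have hpm1 : ((p:ℝ) - 1) ≠ 0 := by intro h; nlinarith
  have hA : betaC p b * Q = (Q * (p : ℝ) - 1) / ((p : ℝ) - 1) := by
    unfold betaC
    rw [Real.rpow_add hq0, Real.rpow_one, ← hQdef]
    field_simp
  -- rewrite p^{-(m)b} as P⁻¹
  have hinv : (p : ℝ) ^ (-(m : ℝ) * b) = P⁻¹ := by
    rw [neg_mul, Real.rpow_neg hq0.le, hPdef]
  -- rewrite φ(1)
  have hsplit : (p : ℝ) ^ (((1:ℝ) - (m : ℝ)) * b) = Q * P⁻¹ := by
    rw [show ((1:ℝ) - (m : ℝ)) * b = b + (-((m : ℝ) * b)) by ring,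
      Real.rpow_add hq0, Real.rpow_neg hq0.le, hQdef, hPdef]
  have hphi : phiC p b m 1 = P / (P - 1) * (1 - betaC p b * Q * P⁻¹) := by
    simp only [phiC, if_neg one_ne_zero, Nat.cast_one, hsplit, ← hPdef]
    ring
  set A : ℝ := betaC p b * Q with hAdef
  clear_value A
  have hA0 : 0 < A := by
    rw [hA]
    apply div_pos <;> nlinarith
  have hA2 : A ≤ 2 * Q := by
    rw [hA, div_le_iff₀ (by linarith : (0:ℝ) < (p : ℝ) - 1)]
    nlinarith
  rw [hphi, hinv]
  -- key bound: A * (1 + P⁻¹) ≤ P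
  have hPi0 : 0 < P⁻¹ := inv_pos.mpr hP0
  have hPinv : P * P⁻¹ = 1 := mul_inv_cancel₀ (ne_of_gt hP0)
  have hPiQ : P⁻¹ ≤ (2 * Real.sqrt 2 * Q)⁻¹ := by
    apply inv_anti₀ (by nlinarith) hPQ
  have hsQinv : 2 * Real.sqrt 2 * Q * (2 * Real.sqrt 2 * Q)⁻¹ = 1 :=
    mul_inv_cancel₀ (by nlinarith)
  have hkey : A * (1 + P⁻¹) ≤ P := by
    have h1 : A * (1 + P⁻¹) ≤ 2 * Q * (1 + (2 * Real.sqrt 2 * Q)⁻¹) := by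
      apply mul_le_mul hA2 (by linarith) (by positivity) (by positivity)
    have h2 : 2 * Q * (1 + (2 * Real.sqrt 2 * Q)⁻¹) ≤ 2 * Real.sqrt 2 * Q := by
      have hi0 : 0 < (2 * Real.sqrt 2 * Q)⁻¹ := by positivity
      nlinarith [hsQinv, mul_pos hQ0 hi0,
        mul_nonneg (by nlinarith : (0:ℝ) ≤ 2 * Real.sqrt 2 - 2)
          (by linarith : (0:ℝ) ≤ Q - 1)]
    linarith
  have hAP : A ≤ P := by nlinarith
  -- nonnegativity of X
  have hX0 : 0 ≤ 1 - A * (1 + P⁻¹) / P := by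
    have : A * (1 + P⁻¹) / P ≤ 1 := (div_le_one hP0).mpr hkey
    linarith
  -- X ≤ φ(1)
  have hid : P / (P - 1) * (1 - A * P⁻¹) =
      (1 - A * (1 + P⁻¹) / P) + (P - A * P⁻¹) / (P * (P - 1)) := by
    have hPne : P ≠ 0 := ne_of_gt hP0
    have hPm1 : P - 1 ≠ 0 := by intro h; nlinarith
    field_simp
    ring
  have hrest : 0 ≤ (P - A * P⁻¹) / (P * (P - 1)) := by
    apply div_nonneg _ (by nlinarith)
    have : A * P⁻¹ ≤ A := by nlinarith
    linarith
  have hXphi : 1 - A * (1 + P⁻¹) / P ≤ P / (P - 1) * (1 - A * P⁻¹) := by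
    rw [hid]; linarith
  have hpow : (1 - A * (1 + P⁻¹) / P) ^ n ≤ (P / (P - 1) * (1 - A * P⁻¹)) ^ n :=
    pow_le_pow_left₀ hX0 hXphi n
  linarith
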